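/- Let 1 < γ < 2 and t1, t2 ≥ 0. Then ∫_{−∞}^{∞} ∫_0^{∞} L_{t1}(s−u, u)·1_{[0,t2]}(s)·u^{−γ} du ds = (1/((γ−1)(2−γ)(3−γ)))·( t2^{3−γ} − (t2−t1)^{3−γ} ) if t1 < t2, and = t2^{3−γ}/((γ−1)(2−γ)(3−γ)) if t1 ≥ t2. -/

import Mathlib

open MeasureTheory Set

/-- `L_t(s,u)`: the Lebesgue measure of `[0,t] ∩ [s,s+u]`. -/
noncomputable def sessLen (t s u : ℝ) : ℝ :=
  (volume (Icc 0 t ∩ Icc s (s + u))).toReal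

lemma sessLen_eq (t s u : ℝ) : sessLen t (s - u) u = max (min s u - max (s - t) 0) 0 := by
  unfold sessLen
  rw [Icc_inter_Icc, Real.volume_Icc, ENNReal.toReal_ofReal']
  congr 1
  simp only [min_def, max_def]
  split_ifs <;> linarith

lemma inner_int (γ s b : ℝ) (hγ1 : 1 < γ) (hγ2 : γ < 2)
    (hs : 0 ≤ s) (hb0 : 0 ≤ b) (hbs : b ≤ s) :
    ∫ u in Ioi (0 : ℝ), max (min s u - b) 0 * u ^ (-γ)
      = (s ^ (2 - γ) - b ^ (2 - γ)) / ((γ - 1) * (2 - γ)) := by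
  have h2γ : (2 : ℝ) - γ ≠ 0 := by linarith
  have h1γ : (1 : ℝ) - γ ≠ 0 := by linarith
  have hγ1' : γ - 1 ≠ 0 := by linarith
  rcases eq_or_lt_of_le hs with hs0 | hs0
  · -- s = 0, then b = 0 and the integrand vanishes
    have hb : b = 0 := le_antisymm (hbs.trans hs0.symm.le) hb0
    subst hb
    rw [← hs0]
    rw [setIntegral_congr_fun measurableSet_Ioi (g := fun _ => (0:ℝ))
      (fun u hu => by
        simp only [sub_zero]
        rw [min_eq_left (le_of_lt hu), max_self, zero_mul])]
    simp [Real.zero_rpow h2γ]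
  · -- s > 0
    set g : ℝ → ℝ := fun u => max (min s u - b) 0 * u ^ (-γ) with hg
    have hmeas : Measurable g := by fun_prop
    -- integrability on Ioi s
    have hint2 : IntegrableOn g (Ioi s) := by
      refine MeasureTheory.IntegrableOn.congr_fun
        (((integrableOn_Ioi_rpow_of_lt (by linarith : -γ < -1) hs0).const_mul
        (s - b))) (fun u hu => ?_) measurableSet_Ioi
      simp only [g]
      rw [min_eq_left (le_of_lt hu), max_eq_left (by linarith)]
    -- integrability on Ioc 0 s
    have hint1 : IntegrableOn g (Ioc 0 s) := by
      refine Integrable.mono ((intervalIntegral.intervalIntegrable_rpow'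
        (by linarith : (-1:ℝ) < 1 - γ)).1) hmeas.aestronglyMeasurable ?_
      filter_upwards [ae_restrict_mem measurableSet_Ioc] with u hu
      have hu0 : 0 < u := hu.1
      rw [Real.norm_eq_abs, Real.norm_eq_abs,
        abs_of_nonneg (mul_nonneg (le_max_right _ _) (Real.rpow_nonneg hu0.le _)),
        abs_of_nonneg (Real.rpow_nonneg hu0.le _)]
      have : u ^ (1 - γ) = u * u ^ (-γ) := by
        rw [show (1:ℝ) - γ = 1 + -γ by ring, Real.rpow_add hu0, Real.rpow_one]
      rw [this]
      have hle : max (min s u - b) 0 ≤ u := by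
        apply max_le _ hu0.le
        have := min_le_right s u
        linarith
      exact mul_le_mul_of_nonneg_right hle (Real.rpow_nonneg hu0.le _)
    have hsplit : Ioc 0 s ∪ Ioi s = Ioi (0:ℝ) := Ioc_union_Ioi_eq_Ioi hs0.le
    rw [← hsplit, setIntegral_union (Ioc_disjoint_Ioi le_rfl) measurableSet_Ioi hint1 hint2]
    -- tail integral
    have htail : ∫ u in Ioi s, g u = (s - b) * (-s ^ (-γ + 1) / (-γ + 1)) := by
      rw [setIntegral_congr_fun measurableSet_Ioi (g := fun u => (s - b) * u ^ (-γ))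
        (fun u hu => by
          simp only [g]
          rw [min_eq_left (le_of_lt hu), max_eq_left (by linarith)]),
        integral_const_mul, integral_Ioi_rpow_of_lt (by linarith) hs0]
    -- head integral: restrict to Ioc b s
    have hhead : ∫ u in Ioc 0 s, g u = ∫ u in Ioc b s, g u := by
      rw [setIntegral_congr_fun measurableSet_Ioc (g := (Ioi b).indicator g)
        (fun u hu => by
          by_cases hub : b < u
          · rw [indicator_of_mem (mem_Ioi.mpr hub)]
          · rw [indicator_of_notMem (by simpa using hub)]
            simp only [g]
            push_neg at hub
            rw [min_eq_right (hub.trans hbs), max_eq_right (by linarith), zero_mul]),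
        setIntegral_indicator measurableSet_Ioi]
      congr 1
      rw [Ioc_inter_Ioi, max_eq_right hb0]
    rw [htail, hhead]
    have hioc : ∫ u in Ioc b s, g u = ∫ u in b..s, (u - b) * u ^ (-γ) := by
      rw [intervalIntegral.integral_of_le hbs]
      apply setIntegral_congr_fun measurableSet_Ioc
      intro u hu
      simp only [g]
      rw [min_eq_right hu.2, max_eq_left (by linarith [hu.1])]
    rw [hioc]
    -- split cases on b = 0
    have hsS : s * s ^ (1 - γ) = s ^ (2 - γ) := by
      rw [show (2:ℝ) - γ = 1 + (1 - γ) by ring, Real.rpow_add hs0, Real.rpow_one]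
    rcases eq_or_lt_of_le hb0 with hb | hb
    · subst hb
      have : ∫ u in (0:ℝ)..s, (u - 0) * u ^ (-γ) = ∫ u in (0:ℝ)..s, u ^ (1 - γ) := by
        apply intervalIntegral.integral_congr
        intro u hu
        rw [uIcc_of_le hs0.le] at hu
        show (u - 0) * u ^ (-γ) = u ^ (1 - γ)
        rcases eq_or_lt_of_le hu.1 with h0u | h0u
        · rw [← h0u]
          simp [Real.zero_rpow h1γ, Real.zero_rpow (by linarith : -γ ≠ 0)]
        · rw [sub_zero, show (1:ℝ) - γ = 1 + -γ by ring, Real.rpow_add h0u, Real.rpow_one]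
      rw [this, integral_rpow (Or.inl (by linarith)),
        show (1:ℝ) - γ + 1 = 2 - γ by ring, Real.zero_rpow h2γ]
      rw [show -γ + 1 = 1 - γ by ring, ← hsS]
      field_simp [h2γ, h1γ, hγ1']
      ring
    · have hbB : b * b ^ (1 - γ) = b ^ (2 - γ) := by
        rw [show (2:ℝ) - γ = 1 + (1 - γ) by ring, Real.rpow_add hb, Real.rpow_one]
      have hnot : (0:ℝ) ∉ uIcc b s := by
        rw [uIcc_of_le hbs]
        exact fun h => absurd h.1 (not_le.mpr hb)
      have : ∫ u in b..s, (u - b) * u ^ (-γ)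
          = (∫ u in b..s, u ^ (1 - γ)) - b * ∫ u in b..s, u ^ (-γ) := by
        rw [← intervalIntegral.integral_const_mul, ← intervalIntegral.integral_sub
          (intervalIntegral.intervalIntegrable_rpow' (by linarith))
          ((intervalIntegral.intervalIntegrable_rpow (Or.inr hnot)).const_mul b)]
        apply intervalIntegral.integral_congr
        intro u hu
        rw [uIcc_of_le hbs] at hu
        have hu0 : 0 < u := hb.trans_le hu.1
        show (u - b) * u ^ (-γ) = u ^ (1 - γ) - b * u ^ (-γ)
        rw [show (1:ℝ) - γ = 1 + -γ by ring, Real.rpow_add hu0, Real.rpow_one]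
        ring
      rw [this, integral_rpow (Or.inl (by linarith)),
        integral_rpow (Or.inr ⟨by linarith, hnot⟩),
        show (1:ℝ) - γ + 1 = 2 - γ by ring, show -γ + 1 = 1 - γ by ring, ← hsS, ← hbB]
      field_simp [h2γ, h1γ, hγ1']
      ring

/-- `∫_{−∞}^{∞} ∫_0^{∞} L_{t1}(s−u,u)·1_{[0,t2]}(s)·u^{−γ} du ds` equals
`(t2^{3−γ} − (t2−t1)^{3−γ})/((γ−1)(2−γ)(3−γ))` if `t1 < t2`,
and `t2^{3−γ}/((γ−1)(2−γ)(3−γ))` if `t1 ≥ t2`. -/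
theorem double_integral_sessLen (γ t1 t2 : ℝ)
    (hγ1 : 1 < γ) (hγ2 : γ < 2) (ht1 : 0 ≤ t1) (ht2 : 0 ≤ t2) :
    (∫ s : ℝ, ∫ u in Ioi (0 : ℝ),
        sessLen t1 (s - u) u * (Icc (0 : ℝ) t2).indicator (fun _ => (1 : ℝ)) s * u ^ (-γ))
      = (if t1 < t2 then t2 ^ (3 - γ) - (t2 - t1) ^ (3 - γ) else t2 ^ (3 - γ)) /
          ((γ - 1) * (2 - γ) * (3 - γ)) := by
  have h2γ : (2 : ℝ) - γ ≠ 0 := by linarith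
  have h3γ : (3 : ℝ) - γ ≠ 0 := by linarith
  have hγ1' : γ - 1 ≠ 0 := by linarith
  have key : (fun s : ℝ => ∫ u in Ioi (0 : ℝ),
        sessLen t1 (s - u) u * (Icc (0 : ℝ) t2).indicator (fun _ => (1 : ℝ)) s * u ^ (-γ))
      = (Icc (0:ℝ) t2).indicator
          (fun s => (s ^ (2 - γ) - max (s - t1) 0 ^ (2 - γ)) / ((γ - 1) * (2 - γ))) := by
    funext s
    by_cases hs : s ∈ Icc (0:ℝ) t2
    · rw [indicator_of_mem hs]
      simp only [sessLen_eq, indicator_of_mem hs, mul_one]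
      exact inner_int γ s (max (s - t1) 0) hγ1 hγ2 hs.1 (le_max_right _ _)
        (max_le (by linarith [hs.1]) hs.1)
    · rw [indicator_of_notMem hs]
      simp [indicator_of_notMem hs]
  rw [key, integral_indicator measurableSet_Icc, integral_Icc_eq_integral_Ioc,
    ← intervalIntegral.integral_of_le ht2, intervalIntegral.integral_div]
  have hcont : Continuous (fun s : ℝ => max (s - t1) 0 ^ (2 - γ)) :=
    Continuous.rpow_const (by continuity) (fun x => Or.inr (by linarith))
  have hInt1 : IntervalIntegrable (fun s : ℝ => s ^ (2 - γ)) volume 0 t2 :=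
    intervalIntegral.intervalIntegrable_rpow' (by linarith)
  rw [intervalIntegral.integral_sub hInt1 (hcont.intervalIntegrable 0 t2),
    integral_rpow (Or.inl (by linarith : (-1:ℝ) < 2 - γ)),
    show (2:ℝ) - γ + 1 = 3 - γ by ring, Real.zero_rpow h3γ]
  have hsecond : (∫ s in (0:ℝ)..t2, max (s - t1) 0 ^ (2 - γ))
      = (if t1 < t2 then (t2 - t1) ^ (3 - γ) else 0) / (3 - γ) := by
    by_cases h : t1 < t2
    · rw [if_pos h,
        ← intervalIntegral.integral_add_adjacent_intervals (a := 0) (b := t1) (c := t2)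
          (hcont.intervalIntegrable 0 t1) (hcont.intervalIntegrable t1 t2)]
      have e1 : (∫ s in (0:ℝ)..t1, max (s - t1) 0 ^ (2 - γ)) = 0 := by
        rw [intervalIntegral.integral_congr (g := fun _ => (0:ℝ))
          (fun s hsx => by
            rw [uIcc_of_le ht1] at hsx
            show max (s - t1) 0 ^ (2 - γ) = 0
            rw [max_eq_right (by linarith [hsx.2]), Real.zero_rpow h2γ])]
        simp
      have e2 : (∫ s in t1..t2, max (s - t1) 0 ^ (2 - γ))
          = (t2 - t1) ^ (3 - γ) / (3 - γ) := by
        rw [intervalIntegral.integral_congr (g := fun s => (s - t1) ^ (2 - γ))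
          (fun s hsx => by
            rw [uIcc_of_le h.le] at hsx
            show max (s - t1) 0 ^ (2 - γ) = (s - t1) ^ (2 - γ)
            rw [max_eq_left (by linarith [hsx.1])]),
          intervalIntegral.integral_comp_sub_right (fun x => x ^ (2 - γ)) t1,
          sub_self,
          integral_rpow (Or.inl (by linarith : (-1:ℝ) < 2 - γ)),
          show (2:ℝ) - γ + 1 = 3 - γ by ring, Real.zero_rpow h3γ]
        ring
      rw [e1, e2, zero_add]
    · rw [if_neg h]
      push_neg at h
      rw [intervalIntegral.integral_congr (g := fun _ => (0:ℝ))
        (fun s hsx => by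
          rw [uIcc_of_le ht2] at hsx
          show max (s - t1) 0 ^ (2 - γ) = 0
          rw [max_eq_right (by linarith [hsx.2]), Real.zero_rpow h2γ])]
      simp
  rw [hsecond, sub_zero, div_sub_div_same, div_div,
    show (3 - γ) * ((γ - 1) * (2 - γ)) = (γ - 1) * (2 - γ) * (3 - γ) by ring]
  split_ifs with h
  · rfl
  · rw [sub_zero]
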